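/- Let k ≥ 1 and let w ∈ G_k be a good involution. Then: (1) c(xwx⁻¹) = c(xwx⁻¹t) = c(w) + a(w); (2) for any 1 ≤ i ≤ k with w(i) = i, c(xw x_i⁻¹) = c(w) + d(i, w). -/

import Mathlib

namespace PaperB

open scoped Classical

def B (n : ℕ) : Subgroup (Equiv.Perm ℤ) where
  carrier := {w | (∀ i : ℤ, w (-i) = - w i) ∧ ∀ i : ℤ, (n : ℤ) < |i| → w i = i}
  one_mem' := ⟨fun _ => rfl, fun _ _ => rfl⟩
  mul_mem' := by
    rintro a b ⟨ha1, ha2⟩ ⟨hb1, hb2⟩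
    refine ⟨fun i => ?_, fun i hi => ?_⟩
    · rw [Equiv.Perm.mul_apply, Equiv.Perm.mul_apply, hb1, ha1]
    · rw [Equiv.Perm.mul_apply, hb2 i hi, ha2 i hi]
  inv_mem' := by
    rintro a ⟨ha1, ha2⟩
    refine ⟨fun i => a.injective ?_, fun i hi => a.injective ?_⟩
    · rw [show ∀ x, a (a⁻¹ x) = x from fun x => a.apply_symm_apply x, ha1,
        show ∀ x, a (a⁻¹ x) = x from fun x => a.apply_symm_apply x]
    · rw [show ∀ x, a (a⁻¹ x) = x from fun x => a.apply_symm_apply x, ha2 i hi]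

def t : Equiv.Perm ℤ := Equiv.swap (-1) 1

def s (i : ℕ) : Equiv.Perm ℤ :=
  Equiv.swap (i : ℤ) ((i : ℤ) + 1) * Equiv.swap (-(i : ℤ)) (-((i : ℤ) + 1))

def gens (n : ℕ) : Set (Equiv.Perm ℤ) := insert t (s '' Set.Ico 1 n)

noncomputable def len (n : ℕ) (w : Equiv.Perm ℤ) : ℕ :=
  sInf {l | ∃ L : List (Equiv.Perm ℤ), (∀ g ∈ L, g ∈ gens n) ∧ L.prod = w ∧ L.length = l}

/-- A model of the Iwahori–Hecke algebra `H_{p,q}(Bₘ)`:  a `ℂ`-algebra `H` together with a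
family `T w`, `w ∈ Bₘ`, which is linearly independent, satisfies `T 1 = 1`, and satisfies the
standard multiplication rule
`T w * T g = T (w g)` if `ℓ(w g) > ℓ(w)` and
`T w * T g = par(g) T (w g) + (1 - par(g)) T w` otherwise,
where `par t = p` and `par sᵢ = q`. -/
structure HeckeModel (m : ℕ) (p q : ℂ) (H : Type) [Ring H] [Algebra ℂ H] where
  T : Equiv.Perm ℤ → H
  T_one : T 1 = 1
  T_mul : ∀ w ∈ B m, ∀ g ∈ gens m,
    T w * T g =
      if len m w < len m (w * g) then T (w * g)
      else (if g = t then p else q) • T (w * g) + (1 - if g = t then p else q) • T w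
  free : LinearIndependent ℂ (fun w : {x // x ∈ B m} => T w.1)

/-- The element `-w`, given by `(-w)(i) = -(w i)`. -/
def negOf (w : Equiv.Perm ℤ) : Equiv.Perm ℤ := (Equiv.neg ℤ : Equiv.Perm ℤ) * w

/-- A good involution in `B_k`. -/
def Good (k : ℕ) (w : Equiv.Perm ℤ) : Prop :=
  w ∈ B k ∧ w * w = 1 ∧ ∀ i : ℤ, 1 ≤ i → i ≤ (k : ℤ) → (w i = i ∨ w i < 0)

/-- `a(w)`: the number of `1 ≤ j ≤ m` with `w j = j`. -/
noncomputable def aFix (m : ℕ) (w : Equiv.Perm ℤ) : ℕ :=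
  ((Finset.Icc (1 : ℤ) (m : ℤ)).filter fun j => w j = j).card

/-- `d(i, w)`: the number of `i < j ≤ m` with `w j = j`. -/
noncomputable def dFix (m : ℕ) (i : ℤ) (w : Equiv.Perm ℤ) : ℕ :=
  ((Finset.Ioc i (m : ℤ)).filter fun j => w j = j).card

/-- `c(w)`: the number of `w`-tidy pairs `{i, j}`, i.e. pairs of distinct indices
`1 ≤ i, j ≤ m` with `-w i < j` and `-w j < i`. -/
noncomputable def cTidy (m : ℕ) (w : Equiv.Perm ℤ) : ℕ :=
  (((Finset.Icc (1 : ℤ) (m : ℤ)) ×ˢ (Finset.Icc (1 : ℤ) (m : ℤ))).filter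
    fun pr => pr.1 < pr.2 ∧ -w pr.1 < pr.2 ∧ -w pr.2 < pr.1).card

/-- `x = t s₁ s₂ ⋯ s_k ∈ B_{k+1}`. -/
def xE (k : ℕ) : Equiv.Perm ℤ := (t :: ((List.range k).map fun j => s (j + 1))).prod

/-- `xᵢ = t s₁ ⋯ ŝᵢ ⋯ s_k ∈ B_{k+1}` (the product with `sᵢ` omitted). -/
def xI (k i : ℕ) : Equiv.Perm ℤ :=
  (t :: ((((List.range k).map fun j => j + 1).filter fun j => j ≠ i).map s)).prod


/-- The parabolic subgroup `S_k ⊆ B_k` generated by `s₁, …, s_{k-1}`. -/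
def Spar (k : ℕ) : Subgroup (Equiv.Perm ℤ) := Subgroup.closure (s '' Set.Ico 1 k)

/-- `c(-w)` for `w ∈ S_k`: the number of neat pairs of `w`, i.e. pairs `{i,j}` of distinct
indices `1 ≤ i, j ≤ k` with `w i < j` and `w j < i`. -/
noncomputable def cNeat (k : ℕ) (w : Equiv.Perm ℤ) : ℕ :=
  (((Finset.Icc (1 : ℤ) (k : ℤ)) ×ˢ (Finset.Icc (1 : ℤ) (k : ℤ))).filter
    fun pr => pr.1 < pr.2 ∧ w pr.1 < pr.2 ∧ w pr.2 < pr.1).card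

/-- The set `X_{0,k}` of distinguished (minimal length) right coset representatives of
`S_k` in `B_k`. -/
def X0 (k : ℕ) : Set (Equiv.Perm ℤ) :=
  {x | x ∈ B k ∧ ∀ u ∈ Spar k, len k x ≤ len k (u * x)}

/-- `Succ(w)` for a good involution `w ∈ G_k`. -/
def Succ (k : ℕ) (w : Equiv.Perm ℤ) : Set (Equiv.Perm ℤ) :=
  {xE k * w * (xE k)⁻¹, xE k * w * (xE k)⁻¹ * t} ∪
    {y | ∃ i : ℕ, 1 ≤ i ∧ i ≤ k ∧ w (i : ℤ) = (i : ℤ) ∧ y = xE k * w * (xI k i)⁻¹}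

/-- The element `c = s_{n+1} s_{n+2} ⋯ s_{n+k} ∈ B_{n+k+1}`. -/
def cElt (n k : ℕ) : Equiv.Perm ℤ := ((List.range k).map fun j => s (n + 1 + j)).prod

/-- The palindromic product `s_{n+k} s_{n+k-1} ⋯ s_{n+i} ⋯ s_{n+k-1} s_{n+k}`. -/
def pal (n k i : ℕ) : Equiv.Perm ℤ :=
  (((List.range (k - i)).map fun j => s (n + k - j)) ++ [s (n + i)] ++
    ((List.range (k - i)).map fun j => s (n + i + 1 + j))).prod

/-- The parabolic subgroup `B_n × S_k` of `B_{n+k}`, generated by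
`{t, s₁, …, s_{n-1}} ∪ {s_{n+1}, …, s_{n+k-1}}` (with `t` omitted when `n = 0`). -/
def P (n k : ℕ) : Subgroup (Equiv.Perm ℤ) :=
  Subgroup.closure
    ((if n = 0 then (∅ : Set (Equiv.Perm ℤ)) else {t}) ∪ s '' Set.Ico 1 n ∪
      s '' Set.Ico (n + 1) (n + k))

/-- The factor `S_k` of `B_n × S_k`, generated by `s_{n+1}, …, s_{n+k-1}`. -/
def SparF (n k : ℕ) : Subgroup (Equiv.Perm ℤ) := Subgroup.closure (s '' Set.Ico (n + 1) (n + k))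

/-- The set `X_{n,k}` of distinguished (minimal length) right coset representatives of
`B_n × S_k` in `B_{n+k}`. -/
def Xnk (n k : ℕ) : Set (Equiv.Perm ℤ) :=
  {x | x ∈ B (n + k) ∧ ∀ u ∈ P n k, len (n + k) x ≤ len (n + k) (u * x)}

/-- The strict Bruhat order on `B_m`: `x < w` iff `x ≠ w` and some reduced expression of `w`
has a subword whose product is `x`. -/
def bruhatLT (m : ℕ) (x w : Equiv.Perm ℤ) : Prop :=
  x ≠ w ∧ ∃ L : List (Equiv.Perm ℤ), (∀ g ∈ L, g ∈ gens m) ∧ L.prod = w ∧ L.length = len m w ∧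
    ∃ L' : List (Equiv.Perm ℤ), L'.Sublist L ∧ L'.prod = x


lemma inv_apply_of {x : Equiv.Perm ℤ} {a b : ℤ} (h : x a = b) : x⁻¹ b = a := by
  rw [← h]; exact x.symm_apply_apply a

lemma t_apply (m : ℤ) : t m = if m = 1 then -1 else if m = -1 then 1 else m := by
  rw [t, Equiv.swap_apply_def]
  split_ifs <;> omega

lemma s_apply' (i : ℕ) (hi : 1 ≤ i) (m : ℤ) :
    s i m = if m = (i:ℤ) then (i:ℤ)+1 else if m = (i:ℤ)+1 then (i:ℤ)
      else if m = -(i:ℤ) then -(i:ℤ)-1 else if m = -(i:ℤ)-1 then -(i:ℤ) else m := by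
  have h : (1:ℤ) ≤ (i:ℤ) := by exact_mod_cast hi
  rw [s, Equiv.Perm.mul_apply, Equiv.swap_apply_def, Equiv.swap_apply_def]
  split_ifs <;> omega

def C (a b : ℕ) : Equiv.Perm ℤ := ((List.range b).map fun j => s (j + a)).prod

set_option maxHeartbeats 2000000 in
lemma C_apply (a b : ℕ) (ha : 1 ≤ a) (m : ℤ) :
    C a b m = if (a:ℤ) ≤ m ∧ m < (a:ℤ)+(b:ℤ) then m+1
      else if m = (a:ℤ)+(b:ℤ) then (a:ℤ)
      else if -(a:ℤ)-(b:ℤ) < m ∧ m ≤ -(a:ℤ) then m-1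
      else if m = -(a:ℤ)-(b:ℤ) then -(a:ℤ)
      else m := by
  have ha' : (1:ℤ) ≤ (a:ℤ) := by exact_mod_cast ha
  induction b generalizing m with
  | zero =>
    simp only [C, List.range_zero, List.map_nil, List.prod_nil, Equiv.Perm.one_apply,
      Nat.cast_zero]
    split_ifs <;> omega
  | succ b ih =>
    have hC : C a (b+1) = C a b * s (b + a) := by
      rw [C, List.range_succ, List.map_append, List.prod_append]
      simp [C]
    rw [hC, Equiv.Perm.mul_apply, s_apply' _ (by omega), ih]
    push_cast
    split_ifs <;> omega

lemma xE_eq (k : ℕ) : xE k = t * C 1 k := by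
  rw [xE, List.prod_cons, C]

lemma filter_list (k i : ℕ) (hi1 : 1 ≤ i) (hik : i ≤ k) :
    (((List.range k).map fun j => j + 1).filter fun j => j ≠ i) =
      ((List.range (i-1)).map fun j => j + 1) ++ ((List.range (k-i)).map fun j => j + (i+1)) := by
  obtain ⟨r, rfl⟩ : ∃ r, k = i + r := ⟨k - i, by omega⟩
  induction r with
  | zero =>
    simp only [Nat.add_zero, Nat.sub_self, List.range_zero, List.map_nil, List.append_nil]
    have hr : List.range i = List.range (i-1) ++ [i-1] := by
      rw [← List.range_succ]; congr 1; omega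
    rw [hr, List.map_append, List.filter_append]
    have hA : (((List.range (i-1)).map fun j => j + 1).filter fun j => j ≠ i) =
        ((List.range (i-1)).map fun j => j + 1) := by
      apply List.filter_eq_self.mpr
      intro a ha
      simp only [List.mem_map, List.mem_range] at ha
      obtain ⟨j, hj, rfl⟩ := ha
      simp only [ne_eq, decide_eq_true_eq]
      omega
    have hB : (([i-1].map fun j => j + 1).filter fun j => j ≠ i) = [] := by
      simp [List.filter_singleton, show i-1+1 = i by omega]
    rw [hA, hB, List.append_nil]
  | succ r ih =>
    rw [show i + (r+1) = (i+r)+1 by omega, List.range_succ, List.map_append, List.filter_append,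
      ih (by omega)]
    rw [show (i+r)+1 - i = r + 1 by omega, List.range_succ, List.map_append]
    rw [show i + r - i = r by omega, List.append_assoc]
    congr 1
    simp [List.filter_singleton, show i+r+1 = r+(i+1) from by omega,
      show ¬(r+(i+1) = i) from by omega]

lemma xI_eq (k i : ℕ) (hi1 : 1 ≤ i) (hik : i ≤ k) :
    xI k i = t * (C 1 (i-1) * C (i+1) (k-i)) := by
  rw [xI, List.prod_cons, filter_list k i hi1 hik, List.map_append, List.prod_append, C, C]
  simp [List.map_map, Function.comp_def]


lemma xE_pre (k : ℕ) (hk : 1 ≤ k) (m : ℤ) : xE k m = t (C 1 k m) := by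
  rw [xE_eq, Equiv.Perm.mul_apply]

lemma xE_pos (k : ℕ) (hk : 1 ≤ k) (m : ℤ) (h1 : 1 ≤ m) (h2 : m ≤ (k:ℤ)) :
    xE k m = m + 1 := by
  have hk' : (1:ℤ) ≤ (k:ℤ) := by exact_mod_cast hk
  rw [xE_pre k hk, C_apply 1 k le_rfl, t_apply]
  push_cast
  split_ifs <;> first | exact False.elim ‹False› | omega

lemma xE_top (k : ℕ) (hk : 1 ≤ k) : xE k ((k:ℤ)+1) = -1 := by
  have hk' : (1:ℤ) ≤ (k:ℤ) := by exact_mod_cast hk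
  rw [xE_pre k hk, C_apply 1 k le_rfl, t_apply]
  push_cast
  split_ifs <;> first | exact False.elim ‹False› | omega

lemma xE_neg (k : ℕ) (hk : 1 ≤ k) (m : ℤ) (h1 : -(k:ℤ) ≤ m) (h2 : m ≤ -1) :
    xE k m = m - 1 := by
  have hk' : (1:ℤ) ≤ (k:ℤ) := by exact_mod_cast hk
  rw [xE_pre k hk, C_apply 1 k le_rfl, t_apply]
  push_cast
  split_ifs <;> first | exact False.elim ‹False› | omega

lemma xE_bot (k : ℕ) (hk : 1 ≤ k) : xE k (-(k:ℤ)-1) = 1 := by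
  have hk' : (1:ℤ) ≤ (k:ℤ) := by exact_mod_cast hk
  rw [xE_pre k hk, C_apply 1 k le_rfl, t_apply]
  push_cast
  split_ifs <;> first | exact False.elim ‹False› | omega

lemma xI_pre (k i : ℕ) (hi1 : 1 ≤ i) (hik : i ≤ k) (m : ℤ) :
    xI k i m = t (C 1 (i-1) (C (i+1) (k-i) m)) := by
  rw [xI_eq k i hi1 hik, Equiv.Perm.mul_apply, Equiv.Perm.mul_apply]

set_option maxHeartbeats 1000000 in
lemma xI_pos (k i : ℕ) (hi1 : 1 ≤ i) (hik : i ≤ k) (m : ℤ)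
    (h1 : 1 ≤ m) (h2 : m ≤ (k:ℤ)) (h3 : m ≠ (i:ℤ)) : xI k i m = m + 1 := by
  have hi' : (1:ℤ) ≤ (i:ℤ) := by exact_mod_cast hi1
  have hik' : (i:ℤ) ≤ (k:ℤ) := by exact_mod_cast hik
  have c1 : ((i-1:ℕ):ℤ) = (i:ℤ)-1 := by omega
  have c2 : ((k-i:ℕ):ℤ) = (k:ℤ)-(i:ℤ) := by omega
  have c3 : ((i+1:ℕ):ℤ) = (i:ℤ)+1 := by omega
  rw [xI_pre k i hi1 hik, C_apply (i+1) (k-i) (by omega)]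
  rw [c2, c3]
  split_ifs <;>
    rw [C_apply 1 (i-1) le_rfl, t_apply] <;>
    rw [c1] <;>
    push_cast <;>
    split_ifs <;>
    first | exact False.elim ‹False› | omega

set_option maxHeartbeats 1000000 in
lemma xI_top (k i : ℕ) (hi1 : 1 ≤ i) (hik : i ≤ k) : xI k i ((k:ℤ)+1) = (i:ℤ)+1 := by
  have hi' : (1:ℤ) ≤ (i:ℤ) := by exact_mod_cast hi1
  have hik' : (i:ℤ) ≤ (k:ℤ) := by exact_mod_cast hik
  have c1 : ((i-1:ℕ):ℤ) = (i:ℤ)-1 := by omega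
  have c2 : ((k-i:ℕ):ℤ) = (k:ℤ)-(i:ℤ) := by omega
  have c3 : ((i+1:ℕ):ℤ) = (i:ℤ)+1 := by omega
  rw [xI_pre k i hi1 hik, C_apply (i+1) (k-i) (by omega)]
  rw [c2, c3]
  split_ifs <;>
    rw [C_apply 1 (i-1) le_rfl, t_apply] <;>
    rw [c1] <;>
    push_cast <;>
    split_ifs <;>
    first | exact False.elim ‹False› | omega

set_option maxHeartbeats 1000000 in
lemma xI_negi (k i : ℕ) (hi1 : 1 ≤ i) (hik : i ≤ k) : xI k i (-(i:ℤ)) = 1 := by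
  have hi' : (1:ℤ) ≤ (i:ℤ) := by exact_mod_cast hi1
  have hik' : (i:ℤ) ≤ (k:ℤ) := by exact_mod_cast hik
  have c1 : ((i-1:ℕ):ℤ) = (i:ℤ)-1 := by omega
  have c2 : ((k-i:ℕ):ℤ) = (k:ℤ)-(i:ℤ) := by omega
  have c3 : ((i+1:ℕ):ℤ) = (i:ℤ)+1 := by omega
  rw [xI_pre k i hi1 hik, C_apply (i+1) (k-i) (by omega)]
  rw [c2, c3]
  split_ifs <;>
    rw [C_apply 1 (i-1) le_rfl, t_apply] <;>
    rw [c1] <;>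
    push_cast <;>
    split_ifs <;>
    first | exact False.elim ‹False› | omega


lemma master (k : ℕ) (w z : Equiv.Perm ℤ) (q : ℤ) (hq0 : 0 ≤ q) (hqk : q ≤ (k:ℤ))
    (H1 : ∀ b : ℤ, 2 ≤ b → b ≤ (k:ℤ)+1 → ((-z 1 < b ∧ -z b < 1) ↔ (q < b - 1 ∧ w (b-1) = b-1)))
    (H2 : ∀ a b : ℤ, 2 ≤ a → a < b → b ≤ (k:ℤ)+1 →
      ((-z a < b ∧ -z b < a) ↔ (-w (a-1) < b-1 ∧ -w (b-1) < a-1))) :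
    cTidy (k+1) z = cTidy k w + dFix k q w := by
  classical
  have hc : (((k+1:ℕ)):ℤ) = (k:ℤ)+1 := by push_cast; ring
  unfold cTidy dFix
  rw [hc]
  rw [← Finset.card_filter_add_card_filter_not
    (s := (Finset.Icc (1:ℤ) ((k:ℤ)+1) ×ˢ Finset.Icc (1:ℤ) ((k:ℤ)+1)).filter
      (fun pr => pr.1 < pr.2 ∧ -z pr.1 < pr.2 ∧ -z pr.2 < pr.1))
    (p := fun pr => pr.1 = 1)]
  have hA : (((Finset.Icc (1:ℤ) ((k:ℤ)+1) ×ˢ Finset.Icc (1:ℤ) ((k:ℤ)+1)).filter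
      (fun pr => pr.1 < pr.2 ∧ -z pr.1 < pr.2 ∧ -z pr.2 < pr.1)).filter
      (fun pr => pr.1 = 1)).card = ((Finset.Ioc q (k:ℤ)).filter fun j => w j = j).card := by
    apply Finset.card_bij' (fun pr _ => pr.2 - 1) (fun b _ => ((1:ℤ), b+1))
    · intro a ha
      simp only [Finset.mem_filter, Finset.mem_product, Finset.mem_Icc] at ha
      obtain ⟨h1, he⟩ := ha
      have h2 : a.2 - 1 + 1 = a.2 := by ring
      rw [h2, ← he]
    · intro b _
      omega
    · intro a ha
      simp only [Finset.mem_filter, Finset.mem_product, Finset.mem_Icc, Finset.mem_Ioc] at ha ⊢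
      obtain ⟨⟨⟨⟨h11, h12⟩, h21, h22⟩, hlt, hz1, hz2⟩, he⟩ := ha
      rw [he] at hlt hz1 hz2
      have hH := (H1 a.2 (by omega) (by omega)).mp ⟨hz1, hz2⟩
      exact ⟨⟨hH.1, by omega⟩, hH.2⟩
    · intro b hb
      simp only [Finset.mem_filter, Finset.mem_Ioc] at hb
      obtain ⟨⟨hb1, hb2⟩, hb3⟩ := hb
      have hH := (H1 (b+1) (by omega) (by omega)).mpr ⟨by omega, by simpa using hb3⟩
      refine Finset.mem_filter.mpr ⟨Finset.mem_filter.mpr ⟨Finset.mem_product.mpr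
        ⟨Finset.mem_Icc.mpr ⟨le_refl 1, by omega⟩, Finset.mem_Icc.mpr ⟨by omega, by omega⟩⟩,
        ?_⟩, rfl⟩
      show (1:ℤ) < b+1 ∧ -z 1 < b+1 ∧ -z (b+1) < 1
      exact ⟨by omega, hH.1, hH.2⟩
  have hB : (((Finset.Icc (1:ℤ) ((k:ℤ)+1) ×ˢ Finset.Icc (1:ℤ) ((k:ℤ)+1)).filter
      (fun pr => pr.1 < pr.2 ∧ -z pr.1 < pr.2 ∧ -z pr.2 < pr.1)).filter
      (fun pr => ¬ pr.1 = 1)).card =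
      ((Finset.Icc (1:ℤ) (k:ℤ) ×ˢ Finset.Icc (1:ℤ) (k:ℤ)).filter
      (fun pr => pr.1 < pr.2 ∧ -w pr.1 < pr.2 ∧ -w pr.2 < pr.1)).card := by
    apply Finset.card_bij' (fun pr _ => (pr.1 - 1, pr.2 - 1)) (fun pr _ => (pr.1 + 1, pr.2 + 1))
    · intro a _
      apply Prod.ext <;> simp
    · intro b _
      apply Prod.ext <;> simp
    · intro a ha
      simp only [Finset.mem_filter, Finset.mem_product, Finset.mem_Icc] at ha
      obtain ⟨⟨⟨⟨h11, h12⟩, h21, h22⟩, hlt, hz1, hz2⟩, he⟩ := ha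
      have hH := (H2 a.1 a.2 (by omega) (by omega) (by omega)).mp ⟨hz1, hz2⟩
      refine Finset.mem_filter.mpr ⟨Finset.mem_product.mpr
        ⟨Finset.mem_Icc.mpr ⟨by omega, by omega⟩, Finset.mem_Icc.mpr ⟨by omega, by omega⟩⟩, ?_⟩
      show a.1 - 1 < a.2 - 1 ∧ -w (a.1-1) < a.2-1 ∧ -w (a.2-1) < a.1-1
      exact ⟨by omega, hH.1, hH.2⟩
    · intro b hb
      simp only [Finset.mem_filter, Finset.mem_product, Finset.mem_Icc] at hb
      obtain ⟨⟨⟨h11, h12⟩, h21, h22⟩, hlt, hw1, hw2⟩ := hb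
      have hH := (H2 (b.1+1) (b.2+1) (by omega) (by omega) (by omega)).mpr
        ⟨by simpa using hw1, by simpa using hw2⟩
      refine Finset.mem_filter.mpr ⟨Finset.mem_filter.mpr ⟨Finset.mem_product.mpr
        ⟨Finset.mem_Icc.mpr ⟨by omega, by omega⟩, Finset.mem_Icc.mpr ⟨by omega, by omega⟩⟩,
        ?_⟩, ?_⟩
      · show b.1 + 1 < b.2 + 1 ∧ -z (b.1+1) < b.2+1 ∧ -z (b.2+1) < b.1+1
        exact ⟨by omega, hH.1, hH.2⟩
      · show ¬ (b.1 + 1 = 1)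
        omega
  rw [hA, hB]
  omega


set_option maxHeartbeats 2000000 in
theorem cTidy_succ (k : ℕ) (hk : 1 ≤ k) (w : Equiv.Perm ℤ) (hw : Good k w) :
    (cTidy (k + 1) (xE k * w * (xE k)⁻¹) = cTidy k w + aFix k w ∧
      cTidy (k + 1) (xE k * w * (xE k)⁻¹ * t) = cTidy k w + aFix k w) ∧
    (∀ i : ℕ, 1 ≤ i → i ≤ k → w (i : ℤ) = (i : ℤ) →
      cTidy (k + 1) (xE k * w * (xI k i)⁻¹) = cTidy k w + dFix k (i : ℤ) w) := by
  classical
  obtain ⟨hBk, hinv, hgood⟩ := hw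
  have hBk' : (∀ i : ℤ, w (-i) = - w i) ∧ ∀ i : ℤ, (k : ℤ) < |i| → w i = i := hBk
  obtain ⟨hodd, hout⟩ := hBk'
  have hww : ∀ m, w (w m) = m := by
    intro m
    have h1 : (w * w) m = m := by rw [hinv]; rfl
    rwa [Equiv.Perm.mul_apply] at h1
  have hk' : (1:ℤ) ≤ (k:ℤ) := by exact_mod_cast hk
  have hw0 : w 0 = 0 := by have h := hodd 0; simp at h; omega
  have hwk1 : w ((k:ℤ)+1) = (k:ℤ)+1 := by
    apply hout
    have : |(k:ℤ)+1| = (k:ℤ)+1 := abs_of_pos (by omega)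
    omega
  have hwm : w (-(k:ℤ)-1) = -(k:ℤ)-1 := by
    apply hout
    have : |-(k:ℤ)-1| = (k:ℤ)+1 := by rw [abs_of_neg (by omega)]; ring
    omega
  have hbnd : ∀ j : ℤ, 1 ≤ j → j ≤ (k:ℤ) → (w j ≠ 0 ∧ -(k:ℤ) ≤ w j ∧ w j ≤ (k:ℤ)) := by
    intro j h1 h2
    have hne : w j ≠ 0 := by
      intro h
      have hj := hww j
      rw [h, hw0] at hj
      omega
    rcases le_or_gt |w j| (k:ℤ) with h | h
    · rw [abs_le] at h
      exact ⟨hne, h.1, h.2⟩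
    · exfalso
      have h2' := hout _ h
      have h3 := hww j
      rw [h2'] at h3
      rw [h3] at h
      have : |j| = j := abs_of_pos (by omega)
      omega
  have hxinvm : ∀ a : ℤ, 2 ≤ a → a ≤ (k:ℤ)+1 → (xE k)⁻¹ a = a - 1 := by
    intro a h1 h2
    exact inv_apply_of (by rw [xE_pos k hk (a-1) (by omega) (by omega)]; ring)
  have hxinv1 : (xE k)⁻¹ 1 = -(k:ℤ)-1 := inv_apply_of (xE_bot k hk)
  have hxinvneg1 : (xE k)⁻¹ (-1) = (k:ℤ)+1 := inv_apply_of (xE_top k hk)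
  set y := xE k * w * (xE k)⁻¹ with hy
  have hy1 : y 1 = 1 := by
    rw [hy, Equiv.Perm.mul_apply, Equiv.Perm.mul_apply, hxinv1, hwm]
    exact xE_bot k hk
  have hyneg1 : y (-1) = -1 := by
    rw [hy, Equiv.Perm.mul_apply, Equiv.Perm.mul_apply, hxinvneg1, hwk1]
    exact xE_top k hk
  have hyv : ∀ a : ℤ, 2 ≤ a → a ≤ (k:ℤ)+1 →
      y a = if 0 < w (a-1) then w (a-1) + 1 else w (a-1) - 1 := by
    intro a h1 h2
    obtain ⟨hne, hlo, hhi⟩ := hbnd (a-1) (by omega) (by omega)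
    rw [hy, Equiv.Perm.mul_apply, Equiv.Perm.mul_apply, hxinvm a h1 h2]
    rcases lt_or_ge 0 (w (a-1)) with hpos | hneg
    · rw [if_pos hpos]
      exact xE_pos k hk _ (by omega) (by omega)
    · rw [if_neg (by omega)]
      exact xE_neg k hk _ (by omega) (by omega)
  have haf : aFix k w = dFix k 0 w := by
    unfold aFix dFix
    have : Finset.Icc (1:ℤ) (k:ℤ) = Finset.Ioc (0:ℤ) (k:ℤ) := by
      ext j
      simp only [Finset.mem_Icc, Finset.mem_Ioc]
      omega
    rw [this]
  have H2y : ∀ a b : ℤ, 2 ≤ a → a < b → b ≤ (k:ℤ)+1 →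
      ((-y a < b ∧ -y b < a) ↔ (-w (a-1) < b-1 ∧ -w (b-1) < a-1)) := by
    intro a b h1 h2 h3
    rw [hyv a h1 (by omega), hyv b (by omega) h3]
    split_ifs <;> omega
  constructor
  · constructor
    · rw [haf]
      apply master k w y 0 le_rfl (by exact_mod_cast Nat.zero_le k)
      · intro b h1 h2
        rw [hy1, hyv b h1 h2]
        rcases hgood (b-1) (by omega) (by omega) with hf | hneg <;> split_ifs <;> omega
      · exact H2y
    · rw [haf]
      apply master k w (y * t) 0 le_rfl (by exact_mod_cast Nat.zero_le k)
      · intro b h1 h2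
        have e1 : (y * t) 1 = -1 := by
          rw [Equiv.Perm.mul_apply]
          have ht : t 1 = -1 := by rw [t_apply]; norm_num
          rw [ht, hyneg1]
        have e2 : (y * t) b = y b := by
          rw [Equiv.Perm.mul_apply]
          have ht : t b = b := by rw [t_apply]; split_ifs <;> omega
          rw [ht]
        rw [e1, e2, hyv b h1 h2]
        rcases hgood (b-1) (by omega) (by omega) with hf | hneg <;> split_ifs <;> omega
      · intro a b h1 h2 h3
        have ea : (y * t) a = y a := by
          rw [Equiv.Perm.mul_apply]
          have ht : t a = a := by rw [t_apply]; split_ifs <;> omega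
          rw [ht]
        have eb : (y * t) b = y b := by
          rw [Equiv.Perm.mul_apply]
          have ht : t b = b := by rw [t_apply]; split_ifs <;> omega
          rw [ht]
        rw [ea, eb]
        exact H2y a b h1 h2 h3
  · intro i hi1 hik hfix
    have hi1' : (1:ℤ) ≤ (i:ℤ) := by exact_mod_cast hi1
    have hik' : (i:ℤ) ≤ (k:ℤ) := by exact_mod_cast hik
    set z := xE k * w * (xI k i)⁻¹ with hz
    have hIinv1 : (xI k i)⁻¹ 1 = -(i:ℤ) := inv_apply_of (xI_negi k i hi1 hik)
    have hIinv2 : (xI k i)⁻¹ ((i:ℤ)+1) = (k:ℤ)+1 := inv_apply_of (xI_top k i hi1 hik)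
    have hIinvm : ∀ a : ℤ, 2 ≤ a → a ≤ (k:ℤ)+1 → a ≠ (i:ℤ)+1 → (xI k i)⁻¹ a = a - 1 := by
      intro a h1 h2 h3
      exact inv_apply_of
        (by rw [xI_pos k i hi1 hik (a-1) (by omega) (by omega) (by omega)]; ring)
    have hwnegi : w (-(i:ℤ)) = -(i:ℤ) := by rw [hodd, hfix]
    have hz1 : z 1 = -(i:ℤ)-1 := by
      rw [hz, Equiv.Perm.mul_apply, Equiv.Perm.mul_apply, hIinv1, hwnegi]
      exact xE_neg k hk _ (by omega) (by omega)
    have hzi1 : z ((i:ℤ)+1) = -1 := by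
      rw [hz, Equiv.Perm.mul_apply, Equiv.Perm.mul_apply, hIinv2, hwk1]
      exact xE_top k hk
    have hzv : ∀ a : ℤ, 2 ≤ a → a ≤ (k:ℤ)+1 → a ≠ (i:ℤ)+1 →
        z a = if 0 < w (a-1) then w (a-1)+1 else w (a-1)-1 := by
      intro a h1 h2 h3
      obtain ⟨hne, hlo, hhi⟩ := hbnd (a-1) (by omega) (by omega)
      rw [hz, Equiv.Perm.mul_apply, Equiv.Perm.mul_apply, hIinvm a h1 h2 h3]
      rcases lt_or_ge 0 (w (a-1)) with hpos | hneg
      · rw [if_pos hpos]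
        exact xE_pos k hk _ (by omega) (by omega)
      · rw [if_neg (by omega)]
        exact xE_neg k hk _ (by omega) (by omega)
    apply master k w z (i:ℤ) (by omega) hik'
    · intro b h1 h2
      rw [hz1]
      by_cases hbi : b = (i:ℤ)+1
      · subst hbi
        rw [hzi1]
        constructor
        · intro h; exfalso; omega
        · intro h; exfalso; omega
      · rw [hzv b h1 h2 hbi]
        rcases hgood (b-1) (by omega) (by omega) with hf | hneg <;> split_ifs <;> omega
    · intro a b h1 h2 h3
      by_cases hai : a = (i:ℤ)+1
      · subst hai
        rw [hzi1, hzv b (by omega) h3 (by omega)]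
        have he : (i:ℤ)+1-1 = (i:ℤ) := by ring
        rw [he, hfix]
        split_ifs <;> omega
      · by_cases hbi : b = (i:ℤ)+1
        · subst hbi
          rw [hzv a h1 (by omega) hai, hzi1]
          have he : (i:ℤ)+1-1 = (i:ℤ) := by ring
          rw [he, hfix]
          split_ifs <;> omega
        · rw [hzv a h1 (by omega) hai, hzv b (by omega) h3 hbi]
          split_ifs <;> omega

end PaperB
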